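/- If u is a derivation of the free associative algebra ℝ⟨x,y⟩ with u([x,y]) = 0 and u is homogeneous of total degree n (i.e., u(x) and u(y) have word length n−1, with n ≥ 1), then u = Φ(f) for the cyclic word f = (1/n)·tr(y·u(x) − x·u(y)). -/

import Mathlib

noncomputable section
open TensorProduct

abbrev A : Type := FreeAlgebra ℝ (Fin 2)
abbrev B : Type := A ⊗[ℝ] A

def X : A := FreeAlgebra.ι ℝ 0
def Y : A := FreeAlgebra.ι ℝ 1

/-- Generator matrices used to define the noncommutative partial derivative `pd d`. -/
def genMat (d i : Fin 2) : Matrix (Fin 2) (Fin 2) B :=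
  !![(Algebra.TensorProduct.includeLeft : A →ₐ[ℝ] B) (FreeAlgebra.ι ℝ i), if i = d then 1 else 0;
     0, Algebra.TensorProduct.includeRight (FreeAlgebra.ι ℝ i)]

def Φmat (d : Fin 2) : A →ₐ[ℝ] Matrix (Fin 2) (Fin 2) B :=
  FreeAlgebra.lift ℝ (genMat d)

/-- The noncommutative partial derivative `∂_x` (for `d = 0`) resp. `∂_y` (for `d = 1`):
on a monomial it splits the word at each occurrence of the letter `d`. -/
def pd (d : Fin 2) (a : A) : B := Φmat d a 0 1

/-- The subspace `[A,A]` spanned by commutators; `tr(A) = A/[A,A]` is the trace space. -/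
def commSub : Submodule ℝ A := Submodule.span ℝ {p : A | ∃ a b : A, p = a * b - b * a}

/-- The trace projection `tr : A → A/[A,A]`. -/
def trc (a : A) : A ⧸ commSub := Submodule.Quotient.mk a

/-- Reversed multiplication `μ_flip : A ⊗ A → A`, `b ⊗ c ↦ c·b`. -/
def flipMul : B →ₗ[ℝ] A :=
  (LinearMap.mul' ℝ A).comp (TensorProduct.comm ℝ A A).toLinearMap

/-- The word `a₁ ⋯ aₙ` in `A` associated to a list of letters. -/
def word (w : List (Fin 2)) : A := (w.map (FreeAlgebra.ι ℝ)).prod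

/-! ### Auxiliary development -/

lemma word_nil : word [] = 1 := rfl

lemma word_cons (i : Fin 2) (w : List (Fin 2)) :
    word (i :: w) = FreeAlgebra.ι ℝ i * word w := by
  simp [word]

lemma word_append (w v : List (Fin 2)) : word (w ++ v) = word w * word v := by
  simp [word]

lemma Φmat_entries (d : Fin 2) (a : A) :
    Φmat d a 1 0 = 0 ∧ Φmat d a 0 0 = a ⊗ₜ[ℝ] (1 : A) ∧ Φmat d a 1 1 = (1 : A) ⊗ₜ[ℝ] a := by
  induction a using FreeAlgebra.induction with
  | grade0 r =>
      rw [AlgHom.commutes]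
      refine ⟨?_, ?_, ?_⟩
      · simp [Matrix.algebraMap_matrix_apply]
      · rw [Matrix.algebraMap_matrix_apply]
        simp [Algebra.TensorProduct.algebraMap_apply]
      · rw [Matrix.algebraMap_matrix_apply]
        simp only [if_pos rfl]
        rw [← (Algebra.TensorProduct.includeRight (R := ℝ) (A := A) (B := A)).commutes r]
        rfl
  | grade1 i =>
      refine ⟨?_, ?_, ?_⟩ <;>
        simp [Φmat, FreeAlgebra.lift_ι_apply, genMat]
  | mul a b ha hb =>
      obtain ⟨ha0, ha1, ha2⟩ := ha
      obtain ⟨hb0, hb1, hb2⟩ := hb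
      rw [map_mul]
      refine ⟨?_, ?_, ?_⟩ <;>
        simp [Matrix.mul_apply, Fin.sum_univ_two, ha0, ha1, ha2, hb0, hb1, hb2,
          Algebra.TensorProduct.tmul_mul_tmul]
  | add a b ha hb =>
      obtain ⟨ha0, ha1, ha2⟩ := ha
      obtain ⟨hb0, hb1, hb2⟩ := hb
      rw [map_add]
      refine ⟨?_, ?_, ?_⟩ <;>
        simp [Matrix.add_apply, ha0, ha1, ha2, hb0, hb1, hb2, TensorProduct.add_tmul,
          TensorProduct.tmul_add]

lemma pd_mul (d : Fin 2) (a b : A) :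
    pd d (a * b) = (a ⊗ₜ[ℝ] (1 : A)) * pd d b + pd d a * ((1 : A) ⊗ₜ[ℝ] b) := by
  have ha := Φmat_entries d a
  have hb := Φmat_entries d b
  unfold pd
  rw [map_mul, Matrix.mul_apply, Fin.sum_univ_two, ha.2.1, hb.2.2]

lemma pd_ι (d i : Fin 2) :
    pd d (FreeAlgebra.ι ℝ i) = if i = d then 1 else 0 := by
  unfold pd Φmat
  rw [FreeAlgebra.lift_ι_apply]
  simp [genMat]

lemma pd_one (d : Fin 2) : pd d 1 = 0 := by
  unfold pd
  rw [map_one, Matrix.one_apply]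
  simp

lemma flipMul_tmul (p q : A) : flipMul (p ⊗ₜ[ℝ] q) = q * p := by
  simp [flipMul]

/-- Linear-map version of `pd`. -/
def pdLin (d : Fin 2) : A →ₗ[ℝ] B where
  toFun := pd d
  map_add' a b := by unfold pd; rw [map_add, Matrix.add_apply]
  map_smul' r a := by
    show Φmat d (r • a) 0 1 = r • Φmat d a 0 1
    rw [map_smul, Matrix.smul_apply]

lemma pdLin_apply (d : Fin 2) (a : A) : pdLin d a = pd d a := rfl

lemma pd_word (d : Fin 2) (w : List (Fin 2)) :
    pd d (word w) = ∑ k ∈ Finset.range w.length,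
      if w[k]? = some d then word (w.take k) ⊗ₜ[ℝ] word (w.drop (k + 1)) else 0 := by
  induction w with
  | nil => simpa [word_nil] using pd_one d
  | cons i t ih =>
      rw [word_cons, pd_mul, ih, Finset.mul_sum]
      rw [List.length_cons, Finset.sum_range_succ']
      congr 1
      · refine Finset.sum_congr rfl fun k _ => ?_
        rw [List.getElem?_cons_succ, List.take_succ_cons, List.drop_succ_cons, word_cons,
          mul_ite, mul_zero, Algebra.TensorProduct.tmul_mul_tmul, one_mul]
      · rw [pd_ι]
        by_cases h : i = d <;> simp [h, Algebra.TensorProduct.one_def,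
          Algebra.TensorProduct.tmul_mul_tmul, word_nil]

/-- The basis of words. -/
abbrev eB : Module.Basis (FreeMonoid (Fin 2)) ℝ A := FreeAlgebra.basisFreeMonoid ℝ (Fin 2)

lemma equiv_word (l : List (Fin 2)) :
    FreeAlgebra.equivMonoidAlgebraFreeMonoid (R := ℝ) (X := Fin 2) (word l)
      = MonoidAlgebra.single (FreeMonoid.ofList l) 1 := by
  induction l with
  | nil =>
      rw [word_nil, map_one]
      rfl
  | cons i t ih =>
      rw [word_cons, map_mul, ih, FreeMonoid.ofList_cons]
      have hι : FreeAlgebra.equivMonoidAlgebraFreeMonoid (R := ℝ) (X := Fin 2)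
          (FreeAlgebra.ι ℝ i) = MonoidAlgebra.single (FreeMonoid.of i) 1 := by
        simp [FreeAlgebra.equivMonoidAlgebraFreeMonoid, FreeAlgebra.lift_ι_apply]
      rw [hι, MonoidAlgebra.single_mul_single, one_mul]

lemma eB_apply (l : List (Fin 2)) : eB (FreeMonoid.ofList l) = word l := by
  have : eB (FreeMonoid.ofList l)
      = (FreeAlgebra.equivMonoidAlgebraFreeMonoid (R := ℝ) (X := Fin 2)).symm
          (MonoidAlgebra.single (FreeMonoid.ofList l) 1) := by
    simp [eB, FreeAlgebra.basisFreeMonoid, Module.Basis.map_apply, Finsupp.coe_basisSingleOne]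
  rw [this, ← equiv_word, AlgEquiv.symm_apply_apply]

lemma eB_apply' (m : FreeMonoid (Fin 2)) : eB m = word (FreeMonoid.toList m) := by
  conv_lhs => rw [← FreeMonoid.ofList_toList m]
  rw [eB_apply]

/-- The "rotate-by-one" operator on words. -/
def σop : A →ₗ[ℝ] A := eB.constr ℝ fun m => word ((FreeMonoid.toList m).rotate 1)

/-- Strip a leading letter `d`. -/
def strip (d : Fin 2) : List (Fin 2) → A
  | [] => 0
  | c :: s => if c = d then word s else 0

/-- The "strip the leading letter `d`" operator. -/
def Ld (d : Fin 2) : A →ₗ[ℝ] A := eB.constr ℝ fun m => strip d (FreeMonoid.toList m)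

lemma σop_word (l : List (Fin 2)) : σop (word l) = word (l.rotate 1) := by
  rw [← eB_apply, σop, Module.Basis.constr_basis, FreeMonoid.toList_ofList]

lemma Ld_word (d : Fin 2) (l : List (Fin 2)) : Ld d (word l) = strip d l := by
  rw [← eB_apply, Ld, Module.Basis.constr_basis, FreeMonoid.toList_ofList]

lemma σop_pow_word (k : ℕ) (l : List (Fin 2)) :
    (σop ^ k) (word l) = word (l.rotate k) := by
  induction k generalizing l with
  | zero => simp
  | succ k ih =>
      rw [pow_succ', Module.End.mul_apply, ih, σop_word, List.rotate_rotate]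

lemma σop_ι_mul (i : Fin 2) (a : A) :
    σop (FreeAlgebra.ι ℝ i * a) = a * FreeAlgebra.ι ℝ i := by
  have h : σop ∘ₗ LinearMap.mulLeft ℝ (FreeAlgebra.ι ℝ i)
      = LinearMap.mulRight ℝ (FreeAlgebra.ι ℝ i) := by
    refine eB.ext fun m => ?_
    rw [eB_apply']
    set l := FreeMonoid.toList m
    rw [LinearMap.comp_apply, LinearMap.mulLeft_apply, LinearMap.mulRight_apply,
      ← word_cons, σop_word, List.rotate_cons_succ, List.rotate_zero, word_append]
    rw [word_cons, word_nil, mul_one]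
  exact DFunLike.congr_fun h a

lemma Ld_ι_mul (d i : Fin 2) (a : A) :
    Ld d (FreeAlgebra.ι ℝ i * a) = if i = d then a else 0 := by
  have h : Ld d ∘ₗ LinearMap.mulLeft ℝ (FreeAlgebra.ι ℝ i)
      = if i = d then LinearMap.id else 0 := by
    refine eB.ext fun m => ?_
    rw [eB_apply']
    set l := FreeMonoid.toList m
    rw [LinearMap.comp_apply, LinearMap.mulLeft_apply, ← word_cons, Ld_word]
    by_cases h : i = d <;> simp [strip, h]
  have := DFunLike.congr_fun h a
  rw [LinearMap.comp_apply, LinearMap.mulLeft_apply] at this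
  rw [this]
  by_cases h : i = d <;> simp [h]

/-- The set of words of length `m`. -/
def Wset (m : ℕ) : Set A := {p : A | ∃ w : List (Fin 2), w.length = m ∧ p = word w}

lemma ι_mul_mem_span (i : Fin 2) (m : ℕ) {a : A}
    (ha : a ∈ Submodule.span ℝ (Wset m)) :
    FreeAlgebra.ι ℝ i * a ∈ Submodule.span ℝ (Wset (m + 1)) := by
  induction ha using Submodule.span_induction with
  | mem x hx =>
      obtain ⟨w, hw, rfl⟩ := hx
      refine Submodule.subset_span ⟨i :: w, by simp [hw], ?_⟩
      rw [word_cons]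
  | zero => simp
  | add x y hx hy hx' hy' => rw [mul_add]; exact Submodule.add_mem _ hx' hy'
  | smul r x hx hx' => rw [mul_smul_comm]; exact Submodule.smul_mem _ r hx'

lemma D_eq_sum (d : Fin 2) (n : ℕ) {g : A} (hg : g ∈ Submodule.span ℝ (Wset n)) :
    flipMul (pd d g) = ∑ k ∈ Finset.range n, Ld d ((σop ^ k) g) := by
  induction hg using Submodule.span_induction with
  | mem x hx =>
      obtain ⟨w, hw, rfl⟩ := hx
      subst hw
      rw [pd_word, map_sum]
      refine Finset.sum_congr rfl fun k hk => ?_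
      have hk' : k < w.length := Finset.mem_range.mp hk
      rw [σop_pow_word, Ld_word]
      have hrot : w.rotate k = w[k] :: (w.drop (k + 1) ++ w.take k) := by
        rw [List.rotate_eq_drop_append_take hk'.le, List.drop_eq_getElem_cons hk',
          List.cons_append]
      rw [hrot]
      have hget : w[k]? = some w[k] := List.getElem?_eq_getElem hk'
      rw [hget]
      by_cases h : w[k] = d
      · rw [if_pos (by rw [h]), strip, if_pos h, flipMul_tmul, word_append]
      · rw [if_neg (by simpa using h), strip, if_neg h, map_zero]
  | zero => simp [← pdLin_apply]
  | add x y hx hy hx' hy' =>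
      rw [← pdLin_apply, map_add, map_add, pdLin_apply, pdLin_apply, hx', hy',
        ← Finset.sum_add_distrib]
      simp [map_add]
  | smul r x hx hx' =>
      rw [← pdLin_apply, map_smul, map_smul, pdLin_apply, hx', Finset.smul_sum]
      simp [map_smul]

/-- If `u` is a derivation of `A = ℝ⟨x,y⟩` with `u([x,y]) = 0`, homogeneous of total
degree `n ≥ 1` (i.e. `u(x)` and `u(y)` are combinations of words of length `n − 1`),
then `u = Φ(f)` for the cyclic word `f = (1/n)·tr(y·u(x) − x·u(y))`, i.e.
`u(x) = ∂_y^{tr}(f)` and `u(y) = −∂_x^{tr}(f)`. -/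
theorem symplectic_derivation_from_cyclic_word
    (n : ℕ) (hn : 1 ≤ n)
    (u : A →ₗ[ℝ] A)
    (hu : ∀ a b : A, u (a * b) = u a * b + a * u b)
    (hω : u (X * Y - Y * X) = 0)
    (hux : u X ∈ Submodule.span ℝ
      {p : A | ∃ w : List (Fin 2), w.length = n - 1 ∧ p = word w})
    (huy : u Y ∈ Submodule.span ℝ
      {p : A | ∃ w : List (Fin 2), w.length = n - 1 ∧ p = word w})
    (Dx Dy : (A ⧸ commSub) →ₗ[ℝ] A)
    (hDx : ∀ a : A, Dx (trc a) = flipMul (pd 0 a))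
    (hDy : ∀ a : A, Dy (trc a) = flipMul (pd 1 a)) :
    u X = Dy ((n : ℝ)⁻¹ • trc (Y * u X - X * u Y)) ∧
      u Y = -(Dx ((n : ℝ)⁻¹ • trc (Y * u X - X * u Y))) := by
  set P : A := u X with hP
  set Q : A := u Y with hQ
  set g : A := Y * P - X * Q with hg
  -- the relation coming from u([x,y]) = 0
  have hrel : P * Y - Q * X = Y * P - X * Q := by
    have h0 : u (X * Y) - u (Y * X) = 0 := by rw [← map_sub]; exact hω
    rw [hu X Y, hu Y X] at h0
    have h1 : P * Y + X * Q = Q * X + Y * P := sub_eq_zero.mp h0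
    rw [sub_eq_sub_iff_add_eq_add, h1, add_comm]
  -- g is rotation-invariant
  have hσg : σop g = g := by
    rw [hg, map_sub]
    rw [show Y = FreeAlgebra.ι ℝ 1 from rfl, show X = FreeAlgebra.ι ℝ 0 from rfl,
      σop_ι_mul, σop_ι_mul]
    exact hrel
  have hσkg : ∀ k : ℕ, (σop ^ k) g = g := by
    intro k
    induction k with
    | zero => simp
    | succ k ih => rw [pow_succ, Module.End.mul_apply, hσg, ih]
  -- g lies in the span of words of length n
  have hgspan : g ∈ Submodule.span ℝ (Wset n) := by
    have h1 := ι_mul_mem_span 1 (n - 1) hux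
    have h2 := ι_mul_mem_span 0 (n - 1) huy
    rw [Nat.sub_add_cancel hn] at h1 h2
    exact Submodule.sub_mem _ h1 h2
  -- the key computation
  have key : ∀ d : Fin 2, flipMul (pd d g) = n • Ld d g := by
    intro d
    rw [D_eq_sum d n hgspan]
    rw [Finset.sum_congr rfl fun k _ => by rw [hσkg k]]
    rw [Finset.sum_const, Finset.card_range]
  have hLy : Ld 1 g = P := by
    rw [hg, map_sub, show Y = FreeAlgebra.ι ℝ 1 from rfl,
      show X = FreeAlgebra.ι ℝ 0 from rfl, Ld_ι_mul, Ld_ι_mul]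
    norm_num
  have hLx : Ld 0 g = -Q := by
    rw [hg, map_sub, show Y = FreeAlgebra.ι ℝ 1 from rfl,
      show X = FreeAlgebra.ι ℝ 0 from rfl, Ld_ι_mul, Ld_ι_mul]
    norm_num
  have hne : (n : ℝ) ≠ 0 := Nat.cast_ne_zero.mpr (by omega)
  constructor
  · rw [map_smul, hDy, key 1, hLy, ← Nat.cast_smul_eq_nsmul ℝ n P, smul_smul,
      inv_mul_cancel₀ hne, one_smul]
  · rw [map_smul, hDx, key 0, hLx, ← Nat.cast_smul_eq_nsmul ℝ n (-Q), smul_smul,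
      inv_mul_cancel₀ hne, one_smul, neg_neg]
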